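/- Let (𝔫⁽¹⁾, ⟨·|·⟩⁽¹⁾) and (𝔫⁽²⁾, ⟨·|·⟩⁽²⁾) be pseudo H-type Lie algebras and suppose φ is a GLA isomorphism of 𝔫⁽¹⁾ onto 𝔫⁽²⁾, i.e., a Lie algebra isomorphism with φ(𝔫₋₁⁽¹⁾) = 𝔫₋₁⁽²⁾ (and hence φ(𝔫₋₂⁽¹⁾) = 𝔫₋₂⁽²⁾). Then there exist a GLA isomorphism ψ of 𝔫⁽¹⁾ onto 𝔫⁽²⁾ and a positive real number α such that: (i) ψ restricted to 𝔫₋₂⁽¹⁾ is an isometry or an anti-isometry, i.e., there is ε ∈ {1,−1} with ⟨ψ(z)|ψ(w)⟩⁽²⁾ = ε⟨z|w⟩⁽¹⁾ for all z, w ∈ 𝔫₋₂⁽¹⁾; and (ii) ψ(x) = α·φ(x) for all x ∈ 𝔫₋₁⁽¹⁾. -/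

import Mathlib

set_option maxHeartbeats 1600000

/-- The center of a Lie algebra, as a submodule. -/
def ctr (L : Type*) [LieRing L] [LieAlgebra ℝ L] : Submodule ℝ L where
  carrier := {z | ∀ x : L, ⁅z, x⁆ = 0}
  add_mem' := by
    intro a b ha hb x
    rw [add_lie, ha x, hb x, add_zero]
  zero_mem' := by
    intro x
    exact zero_lie x
  smul_mem' := by
    intro c a ha x
    rw [smul_lie, ha x, smul_zero]

lemma mem_ctr_iff {L : Type*} [LieRing L] [LieAlgebra ℝ L] (z : L) :
    z ∈ ctr L ↔ ∀ x : L, ⁅z, x⁆ = 0 := Iff.rfl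

lemma aux_decomp {V : Type*} [AddCommGroup V] [Module ℝ V] [FiniteDimensional ℝ V]
    (B : V →ₗ[ℝ] V →ₗ[ℝ] ℝ) (W N : Submodule ℝ V)
    (hW : ∀ z ∈ W, (∀ w ∈ W, B z w = 0) → z = 0)
    (hN : ∀ x : V, x ∈ N ↔ ∀ z ∈ W, B x z = 0) :
    ∀ a : V, ∃ z ∈ W, ∃ x ∈ N, a = z + x := by
  intro a
  set BW : LinearMap.BilinForm ℝ ↥W := B.compl₁₂ W.subtype W.subtype with hBW
  have hnd : BW.Nondegenerate := by
    have hl : BW.SeparatingLeft := by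
      intro z hz
      have : (z : V) = 0 := hW z z.2 (fun w hw => hz ⟨w, hw⟩)
      exact Subtype.ext this
    refine ⟨hl, ?_⟩
    have hinj : Function.Injective BW := by
      rw [← LinearMap.ker_eq_bot]; exact LinearMap.separatingLeft_iff_ker_eq_bot.1 hl
    have hsurj : Function.Surjective BW :=
      (LinearMap.injective_iff_surjective_of_finrank_eq_finrank
        (by simp [Subspace.dual_finrank_eq])).1 hinj
    intro y hy
    apply (Module.forall_dual_apply_eq_zero_iff ℝ y).1
    intro f
    obtain ⟨x, rfl⟩ := hsurj f
    exact hy x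
  set f : Module.Dual ℝ ↥W := (B a).comp W.subtype with hf
  set z : ↥W := (BW.toDual hnd).symm f with hz
  have hzw : ∀ w ∈ W, B (z : V) w = B a w := by
    intro w hw
    have := LinearMap.BilinForm.apply_toDual_symm_apply (B := BW) (hB := hnd) f ⟨w, hw⟩
    exact this
  refine ⟨z, z.2, a - z, ?_, by abel⟩
  rw [hN]
  intro w hw
  simp [map_sub, hzw w hw]

/-- Lemma 2.6: if two pseudo H-type Lie algebras are isomorphic as
graded Lie algebras via φ, then there are a GLA isomorphism ψ and α > 0 such that
ψ is an isometry or anti-isometry on the centers and ψ = α·φ on 𝔫₋₁. -/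
theorem stmt3
    (L₁ : Type*) [LieRing L₁] [LieAlgebra ℝ L₁] [FiniteDimensional ℝ L₁]
    (B₁ : L₁ →ₗ[ℝ] L₁ →ₗ[ℝ] ℝ)
    (hsymm₁ : ∀ a b : L₁, B₁ a b = B₁ b a)
    (hnondeg₁ : ∀ a : L₁, (∀ b : L₁, B₁ a b = 0) → a = 0)
    (h2stepA₁ : ∃ a b : L₁, ⁅a, b⁆ ≠ 0)
    (h2stepB₁ : ∀ a b c : L₁, ⁅a, ⁅b, c⁆⁆ = 0)
    (hctrnd₁ : ∀ z ∈ ctr L₁, (∀ w ∈ ctr L₁, B₁ z w = 0) → z = 0)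
    (n₁ : Submodule ℝ L₁)
    (hn₁ : ∀ x : L₁, x ∈ n₁ ↔ ∀ z ∈ ctr L₁, B₁ x z = 0)
    (J₁ : L₁ → L₁ →ₗ[ℝ] L₁)
    (hJmap₁ : ∀ z ∈ ctr L₁, ∀ x ∈ n₁, J₁ z x ∈ n₁)
    (hJdef₁ : ∀ z ∈ ctr L₁, ∀ x ∈ n₁, ∀ y ∈ n₁, B₁ (J₁ z x) y = B₁ z ⁅x, y⁆)
    (hJsq₁ : ∀ z ∈ ctr L₁, ∀ x ∈ n₁, J₁ z (J₁ z x) = -(B₁ z z) • x)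
    (L₂ : Type*) [LieRing L₂] [LieAlgebra ℝ L₂] [FiniteDimensional ℝ L₂]
    (B₂ : L₂ →ₗ[ℝ] L₂ →ₗ[ℝ] ℝ)
    (hsymm₂ : ∀ a b : L₂, B₂ a b = B₂ b a)
    (hnondeg₂ : ∀ a : L₂, (∀ b : L₂, B₂ a b = 0) → a = 0)
    (h2stepA₂ : ∃ a b : L₂, ⁅a, b⁆ ≠ 0)
    (h2stepB₂ : ∀ a b c : L₂, ⁅a, ⁅b, c⁆⁆ = 0)
    (hctrnd₂ : ∀ z ∈ ctr L₂, (∀ w ∈ ctr L₂, B₂ z w = 0) → z = 0)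
    (n₂ : Submodule ℝ L₂)
    (hn₂ : ∀ x : L₂, x ∈ n₂ ↔ ∀ z ∈ ctr L₂, B₂ x z = 0)
    (J₂ : L₂ → L₂ →ₗ[ℝ] L₂)
    (hJmap₂ : ∀ z ∈ ctr L₂, ∀ x ∈ n₂, J₂ z x ∈ n₂)
    (hJdef₂ : ∀ z ∈ ctr L₂, ∀ x ∈ n₂, ∀ y ∈ n₂, B₂ (J₂ z x) y = B₂ z ⁅x, y⁆)
    (hJsq₂ : ∀ z ∈ ctr L₂, ∀ x ∈ n₂, J₂ z (J₂ z x) = -(B₂ z z) • x)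
    (φ : L₁ ≃ₗ⁅ℝ⁆ L₂)
    (hφ : ∀ x : L₁, x ∈ n₁ ↔ φ x ∈ n₂) :
    ∃ (ψ : L₁ ≃ₗ⁅ℝ⁆ L₂) (α ε : ℝ), 0 < α ∧ (ε = 1 ∨ ε = -1) ∧
      (∀ x : L₁, x ∈ n₁ ↔ ψ x ∈ n₂) ∧
      (∀ z ∈ ctr L₁, ∀ w ∈ ctr L₁, B₂ (ψ z) (ψ w) = ε * B₁ z w) ∧
      (∀ x ∈ n₁, ψ x = α • (φ x : L₂)) := by
  classical
  -- brackets lie in the center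
  have hbrkc₁ : ∀ a b : L₁, ⁅a, b⁆ ∈ ctr L₁ := by
    intro a b
    rw [mem_ctr_iff]
    intro c
    rw [← lie_skew, h2stepB₁, neg_zero]
  have hbrkc₂ : ∀ a b : L₂, ⁅a, b⁆ ∈ ctr L₂ := by
    intro a b
    rw [mem_ctr_iff]
    intro c
    rw [← lie_skew, h2stepB₂, neg_zero]
  -- decompositions
  have hdec₁ : ∀ a : L₁, ∃ z ∈ ctr L₁, ∃ x ∈ n₁, a = z + x :=
    aux_decomp B₁ _ _ hctrnd₁ hn₁
  have hdec₂ : ∀ a : L₂, ∃ z ∈ ctr L₂, ∃ x ∈ n₂, a = z + x :=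
    aux_decomp B₂ _ _ hctrnd₂ hn₂
  -- trivial intersection
  have hcn₁ : ∀ a : L₁, a ∈ ctr L₁ → a ∈ n₁ → a = 0 :=
    fun a hc hn => hctrnd₁ a hc (fun w hw => (hn₁ a).1 hn w hw)
  have hcn₂ : ∀ a : L₂, a ∈ ctr L₂ → a ∈ n₂ → a = 0 :=
    fun a hc hn => hctrnd₂ a hc (fun w hw => (hn₂ a).1 hn w hw)
  -- nondegeneracy on n
  have hdn₁ : ∀ x ∈ n₁, (∀ y ∈ n₁, B₁ x y = 0) → x = 0 := by
    intro x hx h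
    apply hnondeg₁
    intro b
    obtain ⟨z, hz, y, hy, rfl⟩ := hdec₁ b
    rw [map_add, (hn₁ x).1 hx z hz, h y hy, add_zero]
  have hdn₂ : ∀ x ∈ n₂, (∀ y ∈ n₂, B₂ x y = 0) → x = 0 := by
    intro x hx h
    apply hnondeg₂
    intro b
    obtain ⟨z, hz, y, hy, rfl⟩ := hdec₂ b
    rw [map_add, (hn₂ x).1 hx z hz, h y hy, add_zero]
  -- a nonzero bracket of elements of n₁
  obtain ⟨x₀, hx₀, y₀', hy₀', hxy₀⟩ : ∃ x ∈ n₁, ∃ y ∈ n₁, ⁅x, y⁆ ≠ (0 : L₁) := by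
    obtain ⟨a, b, hab⟩ := h2stepA₁
    obtain ⟨z, hz, x, hx, rfl⟩ := hdec₁ a
    obtain ⟨w, hw, y, hy, rfl⟩ := hdec₁ b
    refine ⟨x, hx, y, hy, ?_⟩
    have e : ⁅z + x, w + y⁆ = ⁅x, y⁆ := by
      rw [add_lie, lie_add, lie_add, hz w, hz y, ← lie_skew x w, hw x, neg_zero]
      abel
    rw [← e]; exact hab
  have hy₀ : y₀' ≠ 0 := by
    rintro rfl; exact hxy₀ (lie_zero x₀)
  have hz₀ : ∃ z ∈ ctr L₁, z ≠ (0:L₁) := ⟨⁅x₀, y₀'⁆, hbrkc₁ _ _, hxy₀⟩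
  -- scalar cancellation using y₀'
  have hsc : ∀ a b : ℝ, a • y₀' = b • y₀' → a = b := by
    intro a b hab
    have := sub_eq_zero.2 hab
    rw [← sub_smul] at this
    rcases smul_eq_zero.1 this with h | h
    · exact sub_eq_zero.1 h
    · exact absurd h hy₀
  -- φ and the center
  have hφctr : ∀ z : L₁, z ∈ ctr L₁ → φ z ∈ ctr L₂ := by
    intro z hz
    rw [mem_ctr_iff]
    intro b
    have : ⁅φ z, φ (φ.symm b)⁆ = φ ⁅z, φ.symm b⁆ := (LieHom.map_lie φ.toLieHom _ _).symm
    rw [φ.apply_symm_apply] at this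
    rw [this, hz (φ.symm b)]
    exact φ.toLinearEquiv.map_zero
  have hφctr' : ∀ z : L₁, φ z ∈ ctr L₂ → z ∈ ctr L₁ := by
    intro z hz
    rw [mem_ctr_iff]
    intro b
    have h2 : φ ⁅z, b⁆ = ⁅φ z, φ b⁆ := LieHom.map_lie φ.toLieHom _ _
    rw [hz (φ b)] at h2
    have := congrArg φ.symm h2
    rw [φ.symm_apply_apply] at this
    rw [this]
    exact φ.symm.toLinearEquiv.map_zero
  -- the pulled-back form D
  set lφ : L₁ →ₗ[ℝ] L₂ := φ.toLinearEquiv.toLinearMap with hlφ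
  have hlφa : ∀ a : L₁, lφ a = φ a := fun a => rfl
  set D : L₁ →ₗ[ℝ] L₁ →ₗ[ℝ] ℝ := B₂.compl₁₂ lφ lφ with hD
  have hDa : ∀ a b : L₁, D a b = B₂ (φ a) (φ b) := fun a b => rfl
  have hDsymm : ∀ a b : L₁, D a b = D b a := fun a b => hsymm₂ _ _
  have hDnd : ∀ a : L₁, (∀ b : L₁, D a b = 0) → a = 0 := by
    intro a h
    have : φ a = 0 := by
      apply hnondeg₂
      intro b
      have := h (φ.symm b)
      rwa [hDa, φ.apply_symm_apply] at this
    have h4 := congrArg φ.symm this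
    rw [φ.symm_apply_apply] at h4
    rw [h4]
    exact φ.symm.toLinearEquiv.map_zero
  -- complementarity of the center and n₁
  have hcompl : IsCompl (ctr L₁) n₁ := by
    constructor
    · rw [Submodule.disjoint_def]
      exact hcn₁
    · rw [codisjoint_iff, eq_top_iff]
      intro a _
      obtain ⟨z, hz, x, hx, rfl⟩ := hdec₁ a
      exact Submodule.add_mem_sup hz hx
  -- projections onto the center and n₁
  set pc : L₁ →ₗ[ℝ] L₁ := (ctr L₁).subtype ∘ₗ (ctr L₁).linearProjOfIsCompl n₁ hcompl with hpc
  set pn : L₁ →ₗ[ℝ] L₁ := n₁.subtype ∘ₗ n₁.linearProjOfIsCompl (ctr L₁) hcompl.symm with hpn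
  have hpc_mem : ∀ a : L₁, pc a ∈ ctr L₁ := fun a => ((ctr L₁).linearProjOfIsCompl n₁ hcompl a).2
  have hpn_mem : ∀ a : L₁, pn a ∈ n₁ := fun a => (n₁.linearProjOfIsCompl (ctr L₁) hcompl.symm a).2
  have hpcpn : ∀ a : L₁, pc a + pn a = a := by
    intro a
    exact Submodule.projection_add_projection_eq_self hcompl a
  have hpc_left : ∀ z ∈ ctr L₁, pc z = z := by
    intro z hz
    have := Submodule.linearProjOfIsCompl_apply_left hcompl ⟨z, hz⟩
    exact congrArg Subtype.val this
  have hpc_right : ∀ x ∈ n₁, pc x = 0 := by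
    intro x hx
    have := Submodule.projectionOnto_apply_of_mem_right hcompl hx
    show ((ctr L₁).linearProjOfIsCompl n₁ hcompl x : L₁) = 0
    exact congrArg Subtype.val this
  have hpn_left : ∀ x ∈ n₁, pn x = x := by
    intro x hx
    have := Submodule.linearProjOfIsCompl_apply_left hcompl.symm ⟨x, hx⟩
    exact congrArg Subtype.val this
  have hpn_right : ∀ z ∈ ctr L₁, pn z = 0 := by
    intro z hz
    have := Submodule.projectionOnto_apply_of_mem_right hcompl.symm hz
    show (n₁.linearProjOfIsCompl (ctr L₁) hcompl.symm z : L₁) = 0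
    exact congrArg Subtype.val this
  -- injectivity helper
  have hφ0 : ∀ a : L₁, φ a = 0 → a = 0 := by
    intro a ha
    have h4 := congrArg φ.symm ha
    rw [φ.symm_apply_apply] at h4
    rw [h4]
    exact φ.symm.toLinearEquiv.map_zero
  -- D-orthogonality characterizations
  have hDnc : ∀ z ∈ ctr L₁, ∀ x ∈ n₁, D z x = 0 := by
    intro z hz x hx
    rw [hDa, hsymm₂]
    exact (hn₂ (φ x)).1 ((hφ x).1 hx) (φ z) (hφctr z hz)
  have hDcn : ∀ x ∈ n₁, ∀ z ∈ ctr L₁, D x z = 0 := by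
    intro x hx z hz
    rw [hDa]
    exact (hn₂ (φ x)).1 ((hφ x).1 hx) (φ z) (hφctr z hz)
  have hDorthn : ∀ c : L₁, (∀ x ∈ n₁, D c x = 0) → c ∈ ctr L₁ := by
    intro c h
    obtain ⟨z, hz, x, hx, rfl⟩ := hdec₁ c
    have hx0 : x = 0 := by
      apply hDnd
      intro b
      obtain ⟨w, hw, y, hy, rfl⟩ := hdec₁ b
      have h1 : D x y = 0 := by
        have h2 := h y hy
        rw [map_add, LinearMap.add_apply, hDnc z hz y hy, zero_add] at h2
        exact h2
      rw [map_add, h1, hDcn x hx w hw, add_zero]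
    rw [hx0, add_zero]; exact hz
  have hDorthc : ∀ c : L₁, (∀ z ∈ ctr L₁, D c z = 0) → c ∈ n₁ := by
    intro c h
    obtain ⟨z, hz, x, hx, rfl⟩ := hdec₁ c
    have hz0 : z = 0 := by
      apply hφ0
      apply hctrnd₂ _ (hφctr z hz)
      intro w hw
      have hwc : φ.symm w ∈ ctr L₁ := hφctr' _ (by rwa [φ.apply_symm_apply])
      have h1 := h (φ.symm w) hwc
      rw [map_add, LinearMap.add_apply, hDcn x hx (φ.symm w) hwc, add_zero] at h1
      rw [hDa, φ.apply_symm_apply] at h1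
      exact h1
    rw [hz0, zero_add]; exact hx
  -- the maps σ, G, H
  have hB₁nd : LinearMap.BilinForm.Nondegenerate B₁ :=
    ⟨hnondeg₁, fun y h => hnondeg₁ y (fun x => by rw [hsymm₁]; exact h x)⟩
  have hDnd' : LinearMap.BilinForm.Nondegenerate D :=
    ⟨hDnd, fun y h => hDnd y (fun x => by rw [hDsymm]; exact h x)⟩
  set σ : L₁ →ₗ[ℝ] L₁ :=
    (LinearMap.BilinForm.toDual D hDnd').symm.toLinearMap ∘ₗ (B₁.compl₁₂ pc pc) with hσ
  set G : L₁ →ₗ[ℝ] L₁ :=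
    (LinearMap.BilinForm.toDual B₁ hB₁nd).symm.toLinearMap ∘ₗ (D.compl₁₂ pn pn) with hG
  set H : L₁ →ₗ[ℝ] L₁ :=
    (LinearMap.BilinForm.toDual D hDnd').symm.toLinearMap ∘ₗ (B₁.compl₁₂ pn pn) with hH
  have hσdef : ∀ a b : L₁, D (σ a) b = B₁ (pc a) (pc b) := by
    intro a b
    exact LinearMap.BilinForm.apply_toDual_symm_apply (B := D) (hB := hDnd') _ b
  have hGdef : ∀ a b : L₁, B₁ (G a) b = D (pn a) (pn b) := by
    intro a b
    exact LinearMap.BilinForm.apply_toDual_symm_apply (B := B₁) (hB := hB₁nd) _ b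
  have hHdef : ∀ a b : L₁, D (H a) b = B₁ (pn a) (pn b) := by
    intro a b
    exact LinearMap.BilinForm.apply_toDual_symm_apply (B := D) (hB := hDnd') _ b
  -- memberships
  have hσmem : ∀ a : L₁, σ a ∈ ctr L₁ := by
    intro a
    apply hDorthn
    intro x hx
    rw [hσdef, hpc_right x hx, map_zero]
  have hGmem : ∀ a : L₁, G a ∈ n₁ := by
    intro a
    rw [hn₁]
    intro z hz
    rw [hGdef, hpn_right z hz, map_zero]
  have hHmem : ∀ a : L₁, H a ∈ n₁ := by
    intro a
    apply hDorthc
    intro z hz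
    rw [hHdef, hpn_right z hz, map_zero]
  -- defining properties on the relevant subspaces
  have hσc : ∀ u ∈ ctr L₁, ∀ w ∈ ctr L₁, D (σ u) w = B₁ u w := by
    intro u hu w hw
    rw [hσdef, hpc_left u hu, hpc_left w hw]
  have hGn : ∀ x ∈ n₁, ∀ y ∈ n₁, B₁ (G x) y = D x y := by
    intro x hx y hy
    rw [hGdef, hpn_left x hx, hpn_left y hy]
  have hHn : ∀ x ∈ n₁, ∀ y ∈ n₁, D (H x) y = B₁ x y := by
    intro x hx y hy
    rw [hHdef, hpn_left x hx, hpn_left y hy]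
  have hGH : ∀ y ∈ n₁, G (H y) = y := by
    intro y hy
    have hmem : G (H y) - y ∈ n₁ := Submodule.sub_mem _ (hGmem _) hy
    have h0 : G (H y) - y = 0 := by
      apply hdn₁ _ hmem
      intro w hw
      rw [map_sub, LinearMap.sub_apply, hGn (H y) (hHmem y) w hw, hHn y hy w hw, sub_self]
    have := sub_eq_zero.1 h0
    exact this
  have hGsurj : ∀ y ∈ n₁, ∃ x ∈ n₁, G x = y := fun y hy => ⟨H y, hHmem y, hGH y hy⟩
  -- pointwise bilinearity helpers
  have hB1a : ∀ a b c : L₁, B₁ (a + b) c = B₁ a c + B₁ b c := by intros; simp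
  have hB1s : ∀ a b c : L₁, B₁ (a - b) c = B₁ a c - B₁ b c := by intros; simp
  have hB1m : ∀ (t : ℝ) (a c : L₁), B₁ (t • a) c = t * B₁ a c := by intros; simp
  have hB2a : ∀ a b c : L₂, B₂ (a + b) c = B₂ a c + B₂ b c := by intros; simp
  have hB2s : ∀ a b c : L₂, B₂ (a - b) c = B₂ a c - B₂ b c := by intros; simp
  have hB2m : ∀ (t : ℝ) (a c : L₂), B₂ (t • a) c = t * B₂ a c := by intros; simp
  -- equality test on n₁ / n₂
  have hdiff₁ : ∀ a ∈ n₁, ∀ b ∈ n₁, (∀ y ∈ n₁, B₁ a y = B₁ b y) → a = b := by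
    intro a ha b hb h
    have h0 : a - b = 0 := by
      apply hdn₁ _ (Submodule.sub_mem _ ha hb)
      intro y hy
      rw [hB1s, h y hy, sub_self]
    exact sub_eq_zero.1 h0
  have hdiff₂ : ∀ a ∈ n₂, ∀ b ∈ n₂, (∀ y ∈ n₂, B₂ a y = B₂ b y) → a = b := by
    intro a ha b hb h
    have h0 : a - b = 0 := by
      apply hdn₂ _ (Submodule.sub_mem _ ha hb)
      intro y hy
      rw [hB2s, h y hy, sub_self]
    exact sub_eq_zero.1 h0
  -- linearity of J in the central slot (side 1)
  have hJadd₁ : ∀ z ∈ ctr L₁, ∀ w ∈ ctr L₁, ∀ x ∈ n₁,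
      J₁ (z + w) x = J₁ z x + J₁ w x := by
    intro z hz w hw x hx
    have hzw : z + w ∈ ctr L₁ := Submodule.add_mem _ hz hw
    apply hdiff₁ _ (hJmap₁ _ hzw x hx)
      _ (Submodule.add_mem _ (hJmap₁ z hz x hx) (hJmap₁ w hw x hx))
    intro y hy
    rw [hJdef₁ _ hzw x hx y hy, hB1a, hB1a, hJdef₁ z hz x hx y hy, hJdef₁ w hw x hx y hy]
  have hJsmul₁ : ∀ z ∈ ctr L₁, ∀ (c : ℝ), ∀ x ∈ n₁, J₁ (c • z) x = c • J₁ z x := by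
    intro z hz c x hx
    have hcz : c • z ∈ ctr L₁ := Submodule.smul_mem _ c hz
    apply hdiff₁ _ (hJmap₁ _ hcz x hx) _ (Submodule.smul_mem _ c (hJmap₁ z hz x hx))
    intro y hy
    rw [hJdef₁ _ hcz x hx y hy, hB1m, hB1m, hJdef₁ z hz x hx y hy]
  -- linearity of J in the central slot (side 2)
  have hJadd₂ : ∀ z ∈ ctr L₂, ∀ w ∈ ctr L₂, ∀ x ∈ n₂,
      J₂ (z + w) x = J₂ z x + J₂ w x := by
    intro z hz w hw x hx
    have hzw : z + w ∈ ctr L₂ := Submodule.add_mem _ hz hw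
    apply hdiff₂ _ (hJmap₂ _ hzw x hx)
      _ (Submodule.add_mem _ (hJmap₂ z hz x hx) (hJmap₂ w hw x hx))
    intro y hy
    rw [hJdef₂ _ hzw x hx y hy, hB2a, hB2a, hJdef₂ z hz x hx y hy, hJdef₂ w hw x hx y hy]
  -- anticommutation (side 1)
  have hJanti₁ : ∀ z ∈ ctr L₁, ∀ w ∈ ctr L₁, ∀ x ∈ n₁,
      J₁ z (J₁ w x) + J₁ w (J₁ z x) = (-(2 * B₁ z w)) • x := by
    intro z hz w hw x hx
    have hzw : z + w ∈ ctr L₁ := Submodule.add_mem _ hz hw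
    have h1 := hJsq₁ _ hzw x hx
    rw [hJadd₁ z hz w hw x hx, map_add, hJadd₁ z hz w hw _ (hJmap₁ z hz x hx),
      hJadd₁ z hz w hw _ (hJmap₁ w hw x hx), hJsq₁ z hz x hx, hJsq₁ w hw x hx] at h1
    have hBzw : B₁ (z + w) (z + w) = B₁ z z + 2 * B₁ z w + B₁ w w := by
      rw [hB1a, map_add, map_add, hsymm₁ w z]
      ring
    rw [hBzw] at h1
    have h2 : J₁ z (J₁ w x) + J₁ w (J₁ z x) =
        -(B₁ z z + 2 * B₁ z w + B₁ w w) • x - (-(B₁ z z) • x) - (-(B₁ w w) • x) := by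
      rw [← h1]; abel
    rw [h2, ← sub_smul, ← sub_smul]
    congr 1
    ring
  -- anticommutation (side 2)
  have hJanti₂ : ∀ z ∈ ctr L₂, ∀ w ∈ ctr L₂, ∀ x ∈ n₂,
      J₂ z (J₂ w x) + J₂ w (J₂ z x) = (-(2 * B₂ z w)) • x := by
    intro z hz w hw x hx
    have hzw : z + w ∈ ctr L₂ := Submodule.add_mem _ hz hw
    have h1 := hJsq₂ _ hzw x hx
    rw [hJadd₂ z hz w hw x hx, map_add, hJadd₂ z hz w hw _ (hJmap₂ z hz x hx),
      hJadd₂ z hz w hw _ (hJmap₂ w hw x hx), hJsq₂ z hz x hx, hJsq₂ w hw x hx] at h1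
    have hBzw : B₂ (z + w) (z + w) = B₂ z z + 2 * B₂ z w + B₂ w w := by
      rw [hB2a, map_add, map_add, hsymm₂ w z]
      ring
    rw [hBzw] at h1
    have h2 : J₂ z (J₂ w x) + J₂ w (J₂ z x) =
        -(B₂ z z + 2 * B₂ z w + B₂ w w) • x - (-(B₂ z z) • x) - (-(B₂ w w) • x) := by
      rw [← h1]; abel
    rw [h2, ← sub_smul, ← sub_smul]
    congr 1
    ring
  -- kernel lemma for J₁
  have hJker₁ : ∀ m ∈ ctr L₁, (∀ y ∈ n₁, J₁ m y = 0) → m = 0 := by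
    intro m hm hker
    have key : ∀ w ∈ ctr L₁, B₁ m m + 2 * B₁ m w = 0 := by
      intro w hw
      have hmw : m + w ∈ ctr L₁ := Submodule.add_mem _ hm hw
      have h1 := hJsq₁ _ hmw y₀' hy₀'
      rw [hJadd₁ m hm w hw y₀' hy₀', hker y₀' hy₀', zero_add,
        hJadd₁ m hm w hw _ (hJmap₁ w hw y₀' hy₀'), hker _ (hJmap₁ w hw y₀' hy₀'), zero_add,
        hJsq₁ w hw y₀' hy₀'] at h1
      have h2 := hsc _ _ h1
      have hBmw : B₁ (m + w) (m + w) = B₁ m m + 2 * B₁ m w + B₁ w w := by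
        rw [hB1a, map_add, map_add, hsymm₁ w m]
        ring
      rw [hBmw] at h2
      have h3 := neg_injective h2
      linarith
    have hmm : B₁ m m = 0 := by
      have := key m hm
      linarith
    apply hctrnd₁ m hm
    intro w hw
    have := key w hw
    rw [hmm] at this
    linarith
  -- φ.symm linearity helpers
  have hφsa : ∀ a b : L₂, φ.symm (a + b) = φ.symm a + φ.symm b :=
    fun a b => φ.symm.toLinearEquiv.map_add a b
  have hφsm : ∀ (t : ℝ) (a : L₂), φ.symm (t • a) = t • φ.symm a :=
    fun t a => φ.symm.toLinearEquiv.map_smul t a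
  -- the pulled-back operators P
  set P : L₁ → L₁ → L₁ := fun z x => φ.symm (J₂ (φ z) (φ x)) with hP
  have hPmem : ∀ z ∈ ctr L₁, ∀ x ∈ n₁, P z x ∈ n₁ := by
    intro z hz x hx
    rw [hφ]
    show φ (φ.symm (J₂ (φ z) (φ x))) ∈ n₂
    rw [φ.apply_symm_apply]
    exact hJmap₂ _ (hφctr z hz) _ ((hφ x).1 hx)
  have hPsq : ∀ z ∈ ctr L₁, ∀ x ∈ n₁, P z (P z x) = (-(D z z)) • x := by
    intro z hz x hx
    show φ.symm (J₂ (φ z) (φ (φ.symm (J₂ (φ z) (φ x))))) = (-(D z z)) • x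
    rw [φ.apply_symm_apply, hJsq₂ _ (hφctr z hz) _ ((hφ x).1 hx)]
    rw [hφsm, φ.symm_apply_apply]
    rfl
  have hPpolar : ∀ z ∈ ctr L₁, ∀ w ∈ ctr L₁, ∀ x ∈ n₁,
      P z (P w x) + P w (P z x) = (-(2 * D z w)) • x := by
    intro z hz w hw x hx
    have h1 := hJanti₂ _ (hφctr z hz) _ (hφctr w hw) _ ((hφ x).1 hx)
    have e1 : P z (P w x) = φ.symm (J₂ (φ z) (J₂ (φ w) (φ x))) := by
      show φ.symm (J₂ (φ z) (φ (φ.symm (J₂ (φ w) (φ x))))) = _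
      rw [φ.apply_symm_apply]
    have e2 : P w (P z x) = φ.symm (J₂ (φ w) (J₂ (φ z) (φ x))) := by
      show φ.symm (J₂ (φ w) (φ (φ.symm (J₂ (φ z) (φ x))))) = _
      rw [φ.apply_symm_apply]
    rw [e1, e2, ← hφsa, h1, hφsm, φ.symm_apply_apply]
    rfl
  -- the key intertwining identity
  have hGP : ∀ u ∈ ctr L₁, ∀ x ∈ n₁, G (P (σ u) x) = J₁ u x := by
    intro u hu x hx
    have hσu := hσmem u
    have hPx : P (σ u) x ∈ n₁ := hPmem _ hσu x hx
    apply hdiff₁ _ (hGmem _) _ (hJmap₁ u hu x hx)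
    intro y hy
    rw [hGn _ hPx y hy, hJdef₁ u hu x hx y hy]
    have e1 : D (P (σ u) x) y = B₂ (J₂ (φ (σ u)) (φ x)) (φ y) := by
      rw [hDa]
      show B₂ (φ (φ.symm (J₂ (φ (σ u)) (φ x)))) (φ y) = _
      rw [φ.apply_symm_apply]
    rw [e1, hJdef₂ _ (hφctr _ hσu) _ ((hφ x).1 hx) _ ((hφ y).1 hy)]
    have e2 : ⁅φ x, φ y⁆ = φ ⁅x, y⁆ := (LieHom.map_lie φ.toLieHom _ _).symm
    rw [e2]
    have e3 : B₂ (φ (σ u)) (φ ⁅x, y⁆) = D (σ u) ⁅x, y⁆ := rfl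
    rw [e3, hσc u hu ⁅x, y⁆ (hbrkc₁ x y)]
  -- expressing P through J₁ and G
  have hPval : ∀ u ∈ ctr L₁, B₁ u u ≠ 0 → ∀ x ∈ n₁,
      P (σ u) x = ((D (σ u) (σ u)) / (B₁ u u)) • J₁ u (G x) := by
    intro u hu hq x hx
    have hσu := hσmem u
    have hA : J₁ u (P (σ u) x) = (-(D (σ u) (σ u))) • G x := by
      have h1 := hGP u hu _ (hPmem _ hσu x hx)
      rw [hPsq _ hσu x hx, map_smul] at h1
      exact h1.symm
    have h2 := congrArg (J₁ u) hA
    rw [hJsq₁ u hu _ (hPmem _ hσu x hx), map_smul] at h2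
    -- h2 : (-(B₁ u u)) • P (σ u) x = (-(D (σ u) (σ u))) • J₁ u (G x)
    have h3 : P (σ u) x = (-(B₁ u u))⁻¹ • ((-(D (σ u) (σ u))) • J₁ u (G x)) := by
      rw [← h2, inv_smul_smul₀ (by simpa using hq)]
    rw [h3, smul_smul]
    congr 1
    field_simp

  -- φ linearity helper
  have hφm : ∀ (t : ℝ) (a : L₁), φ (t • a) = t • φ a :=
    fun t a => φ.toLinearEquiv.map_smul t a
  have hPsmul : ∀ (z : L₁) (t : ℝ) (w : L₁), P z (t • w) = t • P z w := by
    intro z t w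
    show φ.symm (J₂ (φ z) (φ (t • w))) = t • φ.symm (J₂ (φ z) (φ w))
    rw [hφm, map_smul, hφsm]
  -- the central pair identity
  have hpair : ∀ u ∈ ctr L₁, ∀ v ∈ ctr L₁, B₁ u u ≠ 0 → B₁ v v ≠ 0 → B₁ u v = 0 →
      D (σ u) (σ u) * B₁ v v = D (σ v) (σ v) * B₁ u u ∧ D (σ u) (σ v) = 0 := by
    intro u hu v hv hqu hqv ho
    have step : ∀ y ∈ n₁,
        (D (σ v) (σ v) / B₁ v v - D (σ u) (σ u) / B₁ u u) • J₁ u (J₁ v y)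
          = (-(2 * D (σ u) (σ v))) • y := by
      intro y hy
      obtain ⟨x, hx, hGx⟩ := hGsurj y hy
      have h1 := hPpolar _ (hσmem u) _ (hσmem v) x hx
      have h2 := congrArg G h1
      rw [map_add, map_smul] at h2
      have e1 : G (P (σ u) (P (σ v) x)) = (D (σ v) (σ v) / B₁ v v) • J₁ u (J₁ v y) := by
        rw [hPval v hv hqv x hx, hPsmul, map_smul,
          hGP u hu _ (hJmap₁ v hv _ (hGmem x)), hGx]
      have e2 : G (P (σ v) (P (σ u) x)) = (D (σ u) (σ u) / B₁ u u) • J₁ v (J₁ u y) := by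
        rw [hPval u hu hqu x hx, hPsmul, map_smul,
          hGP v hv _ (hJmap₁ u hu _ (hGmem x)), hGx]
      rw [e1, e2, hGx] at h2
      have hanti := hJanti₁ u hu v hv y hy
      rw [ho] at hanti
      have hvu : J₁ v (J₁ u y) = -(J₁ u (J₁ v y)) := by
        have h0 : J₁ u (J₁ v y) + J₁ v (J₁ u y) = 0 := by
          rw [hanti]; simp
        exact ((add_eq_zero_iff_neg_eq).1 h0).symm
      rw [hvu, smul_neg] at h2
      rw [sub_smul, sub_eq_add_neg]
      exact h2
    by_cases hδ : D (σ v) (σ v) / B₁ v v - D (σ u) (σ u) / B₁ u u = 0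
    · constructor
      · have h3 : D (σ v) (σ v) / B₁ v v = D (σ u) (σ u) / B₁ u u := by linarith
        have h4 := (div_eq_div_iff hqv hqu).1 h3
        linarith
      · have h3 := step y₀' hy₀'
        rw [hδ, zero_smul] at h3
        have h4 := hsc 0 (-(2 * D (σ u) (σ v))) (by rw [zero_smul]; exact h3)
        linarith
    · exfalso
      set δ := D (σ v) (σ v) / B₁ v v - D (σ u) (σ u) / B₁ u u with hδdef
      set c := (-(2 * D (σ u) (σ v))) / δ with hcdef
      have hceq : ∀ y ∈ n₁, J₁ u (J₁ v y) = c • y := by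
        intro y hy
        have h5 := step y hy
        have h6 : J₁ u (J₁ v y) = δ⁻¹ • (δ • J₁ u (J₁ v y)) := by
          rw [inv_smul_smul₀ hδ]
        rw [h6, h5, smul_smul, hcdef]
        congr 1
        field_simp
      have hJvy : ∀ y ∈ n₁, J₁ v y + (c / B₁ u u) • J₁ u y = 0 := by
        intro y hy
        have h4 := congrArg (J₁ u) (hceq y hy)
        rw [map_smul, hJsq₁ u hu _ (hJmap₁ v hv y hy)] at h4
        have h5 : J₁ v y = (-(B₁ u u))⁻¹ • (c • J₁ u y) := by
          rw [← h4, inv_smul_smul₀ (by simpa using hqu)]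
        have h7 : (-(B₁ u u))⁻¹ * c + c / B₁ u u = 0 := by
          rw [inv_neg]
          field_simp
          ring
        rw [h5, smul_smul, ← add_smul, h7, zero_smul]
      have hm : v + (c / B₁ u u) • u = 0 := by
        apply hJker₁ _ (Submodule.add_mem _ hv (Submodule.smul_mem _ _ hu))
        intro y hy
        rw [hJadd₁ v hv _ (Submodule.smul_mem _ _ hu) y hy, hJsmul₁ u hu _ y hy]
        exact hJvy y hy
      have hveq : v = -((c / B₁ u u) • u) := add_eq_zero_iff_eq_neg.1 hm
      apply hqv
      nth_rewrite 2 [hveq]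
      rw [map_neg, map_smul]
      have : B₁ v u = 0 := by rw [hsymm₁ v u]; exact ho
      simp [this]

  -- quadratic expansion helpers
  have hexp₁ : ∀ a b : L₁, B₁ (a + b) (a + b) = B₁ a a + 2 * B₁ a b + B₁ b b := by
    intro a b
    rw [hB1a, map_add, map_add, hsymm₁ b a]
    ring
  have hexp₂ : ∀ a b : L₁, B₁ (a - b) (a - b) = B₁ a a - 2 * B₁ a b + B₁ b b := by
    intro a b
    rw [hB1s, map_sub, map_sub, hsymm₁ b a]
    ring
  -- orthogonality propagation and the eigenvector property of σ
  have heig : ∀ u ∈ ctr L₁, B₁ u u ≠ 0 →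
      σ u = (B₁ u (σ u) / B₁ u u) • u := by
    intro u hu hqu
    have haniso : ∀ w ∈ ctr L₁, B₁ u w = 0 → B₁ w w ≠ 0 → B₁ (σ u) w = 0 := by
      intro w hw ho hqw
      have h1 := (hpair u hu w hw hqu hqw ho).2
      rw [hsymm₁]
      have h2 := hσc w hw (σ u) (hσmem u)
      rw [← h2, hDsymm]
      exact h1
    have horth : ∀ w ∈ ctr L₁, B₁ u w = 0 → B₁ (σ u) w = 0 := by
      intro w hw ho
      by_cases hqw : B₁ w w ≠ 0
      · exact haniso w hw ho hqw
      push_neg at hqw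
      by_cases hw0 : w = 0
      · rw [hw0, map_zero]
      have hex : ¬ (∀ v ∈ ctr L₁, B₁ w v = 0) := fun h => hw0 (hctrnd₁ w hw h)
      push_neg at hex
      obtain ⟨v, hv, hwv⟩ := hex
      set v₀ : L₁ := v - (B₁ u v / B₁ u u) • u with hv₀def
      have hv₀mem : v₀ ∈ ctr L₁ := Submodule.sub_mem _ hv (Submodule.smul_mem _ _ hu)
      have huv₀ : B₁ u v₀ = 0 := by
        rw [hv₀def, map_sub, map_smul, smul_eq_mul]
        field_simp
        ring
      have hwu : B₁ w u = 0 := by rw [hsymm₁]; exact ho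
      have hwv₀ : B₁ w v₀ = B₁ w v := by
        rw [hv₀def, map_sub, map_smul, hwu]
        simp
      have hwv₀ne : B₁ w v₀ ≠ 0 := by rw [hwv₀]; exact hwv
      have hv₀w : B₁ v₀ w = B₁ w v₀ := hsymm₁ _ _
      by_cases hqv₀ : B₁ v₀ v₀ = 0
      · -- w ± v₀ are both anisotropic
        have hqp : B₁ (w + v₀) (w + v₀) ≠ 0 := by
          rw [hexp₁, hqw, hqv₀]
          simpa using hwv₀ne
        have hqm : B₁ (w - v₀) (w - v₀) ≠ 0 := by
          rw [hexp₂, hqw, hqv₀]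
          simpa using hwv₀ne
        have hop : B₁ u (w + v₀) = 0 := by rw [map_add, ho, huv₀, add_zero]
        have homi : B₁ u (w - v₀) = 0 := by rw [map_sub, ho, huv₀, sub_zero]
        have hpp := haniso _ (Submodule.add_mem _ hw hv₀mem) hop hqp
        have hmm2 := haniso _ (Submodule.sub_mem _ hw hv₀mem) homi hqm
        rw [map_add] at hpp
        rw [map_sub] at hmm2
        linarith
      · -- v₀ anisotropic; one of w ± v₀ is anisotropic
        have hσv₀ := haniso v₀ hv₀mem huv₀ hqv₀
        by_cases h1 : B₁ (w + v₀) (w + v₀) = 0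
        · have hqm : B₁ (w - v₀) (w - v₀) ≠ 0 := by
            rw [hexp₁, hqw] at h1
            rw [hexp₂, hqw]
            intro h2
            apply hqv₀
            linarith
          have homi : B₁ u (w - v₀) = 0 := by rw [map_sub, ho, huv₀, sub_zero]
          have hmm2 := haniso _ (Submodule.sub_mem _ hw hv₀mem) homi hqm
          rw [map_sub] at hmm2
          linarith
        · have hop : B₁ u (w + v₀) = 0 := by rw [map_add, ho, huv₀, add_zero]
          have hpp := haniso _ (Submodule.add_mem _ hw hv₀mem) hop h1
          rw [map_add] at hpp
          linarith
    -- now σ u is forced to be parallel to u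
    have hfin : ∀ w ∈ ctr L₁, B₁ (σ u - (B₁ u (σ u) / B₁ u u) • u) w = 0 := by
      intro w hw
      set w' : L₁ := w - (B₁ u w / B₁ u u) • u with hw'def
      have hw'mem : w' ∈ ctr L₁ := Submodule.sub_mem _ hw (Submodule.smul_mem _ _ hu)
      have huw' : B₁ u w' = 0 := by
        rw [hw'def, map_sub, map_smul, smul_eq_mul]
        field_simp
        ring
      have h1 := horth w' hw'mem huw'
      have hσuw : B₁ (σ u) w = (B₁ u w / B₁ u u) * B₁ (σ u) u := by
        have : w = w' + (B₁ u w / B₁ u u) • u := by rw [hw'def]; abel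
        nth_rewrite 1 [this]
        rw [map_add, map_smul, h1]
        simp
      rw [hB1s, hB1m, hσuw, hsymm₁ (σ u) u]
      ring
    have hmem : σ u - (B₁ u (σ u) / B₁ u u) • u ∈ ctr L₁ :=
      Submodule.sub_mem _ (hσmem u) (Submodule.smul_mem _ _ hu)
    have := hctrnd₁ _ hmem hfin
    exact sub_eq_zero.1 this

  -- the eigenvalue is constant among anisotropic central vectors
  have hconst : ∀ u ∈ ctr L₁, ∀ v ∈ ctr L₁, B₁ u u ≠ 0 → B₁ v v ≠ 0 →
      B₁ u (σ u) / B₁ u u = B₁ v (σ v) / B₁ v v := by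
    intro u hu v hv hqu hqv
    by_cases ho : B₁ u v = 0
    · have hr := (hpair u hu v hv hqu hqv ho).1
      rw [hσc u hu _ (hσmem u), hσc v hv _ (hσmem v)] at hr
      rw [div_eq_div_iff hqu hqv]
      linarith
    · have hu0 : u ≠ 0 := fun h => hqu (by rw [h]; simp)
      have hv0 : v ≠ 0 := fun h => hqv (by rw [h]; simp)
      have hσu := heig u hu hqu
      have hσv := heig v hv hqv
      set lu := B₁ u (σ u) / B₁ u u with hlu
      set lv := B₁ v (σ v) / B₁ v v with hlv
      by_cases hk : ∃ k : ℝ, v = k • u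
      · obtain ⟨k, rfl⟩ := hk
        have hk0 : k ≠ 0 := by
          intro h
          apply hv0
          rw [h, zero_smul]
        have e1 : σ (k • u) = k • σ u := map_smul σ k u
        rw [hlu, hlv, e1, hB1m, hB1m, map_smul, map_smul, smul_eq_mul, smul_eq_mul]
        rw [hσu]
        rw [map_smul, smul_eq_mul]
        field_simp
      · -- u, v independent
        have hqt : ∀ t : ℝ, B₁ (u + t • v) (u + t • v)
            = B₁ u u + 2 * t * B₁ u v + t ^ 2 * B₁ v v := by
          intro t
          rw [hexp₁, hB1m, map_smul, map_smul, smul_eq_mul, smul_eq_mul]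
          ring
        have ht : ∃ t : ℝ, t ≠ 0 ∧ B₁ (u + t • v) (u + t • v) ≠ 0 := by
          by_cases h1 : B₁ (u + (1:ℝ) • v) (u + (1:ℝ) • v) ≠ 0
          · exact ⟨1, one_ne_zero, h1⟩
          by_cases h2 : B₁ (u + (2:ℝ) • v) (u + (2:ℝ) • v) ≠ 0
          · exact ⟨2, two_ne_zero, h2⟩
          push_neg at h1 h2
          rw [hqt] at h1 h2
          refine ⟨3, three_ne_zero, ?_⟩
          rw [hqt]
          intro h3
          apply hqv
          nlinarith [h1, h2, h3]
        obtain ⟨t, ht0, htq⟩ := ht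
        set w : L₁ := u + t • v with hwdef
        have hwmem : w ∈ ctr L₁ := Submodule.add_mem _ hu (Submodule.smul_mem _ _ hv)
        set lw := B₁ w (σ w) / B₁ w w with hlw
        have hσw := heig w hwmem htq
        have hAB : lu • u + (t * lv) • v = lw • u + (lw * t) • v := by
          have e1 : σ w = σ u + t • σ v := by
            rw [hwdef, map_add, map_smul]
          rw [hσu, hσv] at e1
          have e2 : σ w = lw • w := hσw
          rw [e2, hwdef, smul_add, smul_smul] at e1
          rw [smul_smul] at e1
          exact e1.symm
        have h5 : (lu - lw) • u + (t * lv - lw * t) • v = 0 := by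
          rw [sub_smul, sub_smul,
            show lu • u - lw • u + ((t * lv) • v - (lw * t) • v)
              = (lu • u + (t * lv) • v) - (lw • u + (lw * t) • v) from by abel,
            hAB, sub_self]
        by_cases hne : lu = lw
        · rw [hne, sub_self, zero_smul, zero_add] at h5
          have hco : t * lv - lw * t = 0 := by
            rcases smul_eq_zero.1 h5 with h | h
            · exact h
            · exact absurd h hv0
          have : t * lv = t * lw := by linarith
          have := mul_left_cancel₀ ht0 this
          rw [hne, this]
        · exfalso
          have hne' : lu - lw ≠ 0 := sub_ne_zero.2 hne
          have hu_eq : u = ((lu - lw)⁻¹ * (lw * t - t * lv)) • v := by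
            have h6 : (lu - lw) • u = (lw * t - t * lv) • v := by
              have h7 : (lu - lw) • u = -((t * lv - lw * t) • v) := by
                rw [eq_neg_iff_add_eq_zero]
                exact h5
              rw [h7, ← neg_smul]
              congr 1
              ring
            rw [← smul_smul, ← h6, inv_smul_smul₀ hne']
          by_cases hc0 : (lu - lw)⁻¹ * (lw * t - t * lv) = 0
          · apply hu0
            rw [hu_eq, hc0, zero_smul]
          · apply hk
            refine ⟨((lu - lw)⁻¹ * (lw * t - t * lv))⁻¹, ?_⟩
            rw [hu_eq, smul_smul, inv_mul_cancel₀ hc0, one_smul]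
  -- there is an anisotropic central vector
  obtain ⟨u₀, hu₀, hqu₀⟩ : ∃ u ∈ ctr L₁, B₁ u u ≠ 0 := by
    by_contra hno
    push_neg at hno
    obtain ⟨z₁, hz₁c, hz₁ne⟩ := hz₀
    apply hz₁ne
    apply hctrnd₁ _ hz₁c
    intro w hw
    have h1 := hno _ (Submodule.add_mem _ hz₁c hw)
    rw [hexp₁, hno _ hz₁c, hno _ hw] at h1
    linarith
  set s : ℝ := B₁ u₀ (σ u₀) / B₁ u₀ u₀ with hs
  have hanis : ∀ w ∈ ctr L₁, B₁ w w ≠ 0 → σ w = s • w := by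
    intro w hw hqw
    rw [heig w hw hqw, hconst w hw u₀ hu₀ hqw hqu₀]
  have hσs : ∀ w ∈ ctr L₁, σ w = s • w := by
    intro w hw
    by_cases hqw : B₁ w w ≠ 0
    · exact hanis w hw hqw
    push_neg at hqw
    by_cases hw0 : w = 0
    · rw [hw0]; simp
    have hex : ¬ (∀ v ∈ ctr L₁, B₁ w v = 0) := fun h => hw0 (hctrnd₁ w hw h)
    push_neg at hex
    obtain ⟨v, hv, hwv⟩ := hex
    by_cases hqv : B₁ v v = 0
    · have hqp : B₁ (w + v) (w + v) ≠ 0 := by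
        rw [hexp₁, hqw, hqv]
        simpa using hwv
      have hqm : B₁ (w - v) (w - v) ≠ 0 := by
        rw [hexp₂, hqw, hqv]
        simpa using hwv
      have h1 := hanis _ (Submodule.add_mem _ hw hv) hqp
      have h2 := hanis _ (Submodule.sub_mem _ hw hv) hqm
      rw [map_add] at h1
      rw [map_sub] at h2
      have h3 : σ w + σ w = s • w + s • w := by
        have := congrArg₂ (· + ·) h1 h2
        simpa [smul_add, smul_sub] using by
          have h4 : σ w + σ v + (σ w - σ v) = s • (w + v) + s • (w - v) := by
            rw [h1, h2]
          rw [smul_add, smul_sub] at h4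
          have h5 : σ w + σ w = s • w + s • w := by
            have e : σ w + σ v + (σ w - σ v) = σ w + σ w := by abel
            have e' : s • w + s • v + (s • w - s • v) = s • w + s • w := by abel
            rw [e, e'] at h4
            exact h4
          exact h5
      have h6 : (2:ℝ) • σ w = (2:ℝ) • (s • w) := by
        rw [two_smul, two_smul]
        exact h3
      exact smul_right_injective _ (two_ne_zero) h6
    · by_cases h1 : B₁ (w + v) (w + v) = 0
      · have hqm : B₁ (w - v) (w - v) ≠ 0 := by
          rw [hexp₁] at h1
          rw [hexp₂, hqw]
          rw [hqw] at h1
          intro h2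
          apply hqv
          linarith
        have h2 := hanis _ (Submodule.sub_mem _ hw hv) hqm
        rw [map_sub] at h2
        have h3 := hanis v hv hqv
        have : σ w = (σ w - σ v) + σ v := by abel
        rw [this, h2, h3, smul_sub]
        abel
      · have h2 := hanis _ (Submodule.add_mem _ hw hv) h1
        rw [map_add] at h2
        have h3 := hanis v hv hqv
        have : σ w = (σ w + σ v) - σ v := by abel
        rw [this, h2, h3, smul_add]
        abel
  -- the scalar is nonzero
  have hs0 : s ≠ 0 := by
    intro h
    obtain ⟨z₁, hz₁c, hz₁ne⟩ := hz₀
    apply hz₁ne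
    apply hctrnd₁ _ hz₁c
    intro w hw
    have h1 := hσc z₁ hz₁c w hw
    rw [hσs z₁ hz₁c, h, zero_smul, map_zero, LinearMap.zero_apply] at h1
    exact h1.symm
  -- D is a scalar multiple of B₁ on the center
  have hDm : ∀ (t : ℝ) (a c : L₁), D (t • a) c = t * D a c := by intros; simp
  have hDc : ∀ z ∈ ctr L₁, ∀ w ∈ ctr L₁, D z w = s⁻¹ * B₁ z w := by
    intro z hz w hw
    have h1 := hσc z hz w hw
    rw [hσs z hz, hDm] at h1
    rw [← h1]
    field_simp

  -- abbreviations for the scalar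
  set c : ℝ := s⁻¹ with hcdef
  have hc0 : c ≠ 0 := inv_ne_zero hs0
  set α : ℝ := |c| ^ (-(1/4 : ℝ)) with hαdef
  have hαpos : 0 < α := Real.rpow_pos_of_pos (abs_pos.2 hc0) _
  have hα0 : α ≠ 0 := ne_of_gt hαpos
  have hα4 : α ^ (4:ℕ) = |c|⁻¹ := by
    rw [hαdef, ← Real.rpow_natCast (|c| ^ (-(1/4:ℝ))) 4, ← Real.rpow_mul (abs_nonneg c)]
    norm_num
    exact Real.rpow_neg_one _
  set ε : ℝ := if 0 < c then (1:ℝ) else -1 with hεdef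
  have hαc : α ^ (4:ℕ) * c = ε := by
    rw [hα4, hεdef]
    by_cases hcp : 0 < c
    · rw [if_pos hcp, abs_of_pos hcp]
      field_simp
    · rw [if_neg hcp]
      have hcneg : c < 0 := lt_of_le_of_ne (not_lt.1 hcp) hc0
      rw [abs_of_neg hcneg, inv_neg]
      field_simp
  -- the rescaling map
  set θ : L₁ →ₗ[ℝ] L₁ := (α ^ 2) • pc + α • pn with hθdef
  set θ' : L₁ →ₗ[ℝ] L₁ := (α ^ 2)⁻¹ • pc + α⁻¹ • pn with hθ'def
  have hθapp : ∀ a : L₁, θ a = (α ^ 2) • pc a + α • pn a := fun a => rfl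
  have hθ'app : ∀ a : L₁, θ' a = (α ^ 2)⁻¹ • pc a + α⁻¹ • pn a := fun a => rfl
  have hα2 : (α : ℝ) ^ 2 ≠ 0 := pow_ne_zero 2 hα0
  have hpc_pc : ∀ a : L₁, pc (pc a) = pc a := fun a => hpc_left _ (hpc_mem a)
  have hpc_pn : ∀ a : L₁, pc (pn a) = 0 := fun a => hpc_right _ (hpn_mem a)
  have hpn_pn : ∀ a : L₁, pn (pn a) = pn a := fun a => hpn_left _ (hpn_mem a)
  have hpn_pc : ∀ a : L₁, pn (pc a) = 0 := fun a => hpn_right _ (hpc_mem a)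
  have hθpc : ∀ a : L₁, θ (pc a) = (α ^ 2) • pc a := by
    intro a
    rw [hθapp, hpc_pc, hpn_pc, smul_zero, add_zero]
  have hθpn : ∀ a : L₁, θ (pn a) = α • pn a := by
    intro a
    rw [hθapp, hpc_pn, hpn_pn, smul_zero, zero_add]
  have hθ'pc : ∀ a : L₁, θ' (pc a) = (α ^ 2)⁻¹ • pc a := by
    intro a
    rw [hθ'app, hpc_pc, hpn_pc, smul_zero, add_zero]
  have hθ'pn : ∀ a : L₁, θ' (pn a) = α⁻¹ • pn a := by
    intro a
    rw [hθ'app, hpc_pn, hpn_pn, smul_zero, zero_add]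
  have hθθ' : ∀ a : L₁, θ (θ' a) = a := by
    intro a
    rw [hθ'app, map_add, map_smul, map_smul, hθpc, hθpn, smul_smul, smul_smul,
      inv_mul_cancel₀ hα2, inv_mul_cancel₀ hα0, one_smul, one_smul, hpcpn]
  have hθ'θ : ∀ a : L₁, θ' (θ a) = a := by
    intro a
    rw [hθapp, map_add, map_smul, map_smul, hθ'pc, hθ'pn, smul_smul, smul_smul,
      mul_inv_cancel₀ hα2, mul_inv_cancel₀ hα0, one_smul, one_smul, hpcpn]
  -- brackets only see the n₁-components
  have hbrkpn : ∀ a b : L₁, ⁅a, b⁆ = ⁅pn a, pn b⁆ := by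
    intro a b
    conv_lhs => rw [← hpcpn a, ← hpcpn b]
    rw [add_lie, lie_add, lie_add, hpc_mem a (pc b), hpc_mem a (pn b),
      ← lie_skew (pn a) (pc b), hpc_mem b (pn a)]
    abel
  -- φ additivity helper
  have hφa : ∀ a b : L₁, φ (a + b) = φ a + φ b := fun a b => φ.toLinearEquiv.map_add a b
  have hφz : φ (0 : L₁) = 0 := φ.toLinearEquiv.map_zero
  -- the underlying linear map of ψ
  set ψf : L₁ →ₗ[ℝ] L₂ := lφ ∘ₗ θ with hψfdef
  have hψfapp : ∀ a : L₁, ψf a = φ (θ a) := fun a => rfl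
  have hψflie : ∀ a b : L₁, ψf ⁅a, b⁆ = ⁅ψf a, ψf b⁆ := by
    intro a b
    have hbr : ⁅a, b⁆ ∈ ctr L₁ := hbrkc₁ a b
    have e1 : ψf ⁅a, b⁆ = (α ^ 2) • φ ⁅pn a, pn b⁆ := by
      rw [hψfapp, hθapp, hpc_left _ hbr, hpn_right _ hbr, smul_zero, add_zero,
        hφm, hbrkpn]
    have e2 : ∀ x : L₁, ψf x = (α ^ 2) • φ (pc x) + α • φ (pn x) := by
      intro x
      rw [hψfapp, hθapp, hφa, hφm, hφm]
    rw [e1, e2 a, e2 b]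
    rw [add_lie, lie_add, lie_add, smul_lie, smul_lie, smul_lie, smul_lie,
      lie_smul, lie_smul, lie_smul, lie_smul]
    have hz1 : ⁅φ (pc a), φ (pc b)⁆ = 0 := hφctr _ (hpc_mem a) _
    have hz2 : ⁅φ (pc a), φ (pn b)⁆ = 0 := hφctr _ (hpc_mem a) _
    have hz3 : ⁅φ (pn a), φ (pc b)⁆ = 0 := by
      rw [← lie_skew, hφctr _ (hpc_mem b) _, neg_zero]
    rw [hz1, hz2, hz3]
    have e3 : ⁅φ (pn a), φ (pn b)⁆ = φ ⁅pn a, pn b⁆ :=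
      (LieHom.map_lie φ.toLieHom _ _).symm
    rw [e3]
    simp only [smul_zero, add_zero, zero_add]
    rw [smul_smul]
    congr 1
    ring
  -- assemble the Lie algebra equivalence
  set ψ : L₁ ≃ₗ⁅ℝ⁆ L₂ :=
    { toLinearMap := ψf
      map_lie' := by intro x y; exact hψflie x y
      invFun := fun b => θ' (φ.symm b)
      left_inv := by
        intro a
        show θ' (φ.symm (φ (θ a))) = a
        rw [φ.symm_apply_apply, hθ'θ]
      right_inv := by
        intro b
        show φ (θ (θ' (φ.symm b))) = b
        rw [hθθ', φ.apply_symm_apply] } with hψdef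
  have hψapp : ∀ a : L₁, ψ a = (α ^ 2) • φ (pc a) + α • φ (pn a) := by
    intro a
    show φ (θ a) = _
    rw [hθapp, hφa, hφm, hφm]
  refine ⟨ψ, α, ε, hαpos, ?_, ?_, ?_, ?_⟩
  · rw [hεdef]
    by_cases hcp : 0 < c
    · left; rw [if_pos hcp]
    · right; rw [if_neg hcp]
  · -- grading
    intro x
    constructor
    · intro hx
      rw [hψapp, hpc_right x hx, hpn_left x hx, hφz, smul_zero, zero_add]
      exact Submodule.smul_mem _ _ ((hφ x).1 hx)
    · intro hx
      rw [hψapp] at hx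
      have h1 : α • φ (pn x) ∈ n₂ := Submodule.smul_mem _ _ ((hφ (pn x)).1 (hpn_mem x))
      have h2 : (α ^ 2) • φ (pc x) ∈ n₂ := by
        have := Submodule.sub_mem _ hx h1
        simpa using this
      have h3 : (α ^ 2) • φ (pc x) ∈ ctr L₂ :=
        Submodule.smul_mem _ _ (hφctr _ (hpc_mem x))
      have h4 := hcn₂ _ h3 h2
      have h5 : φ (pc x) = 0 := by
        rcases smul_eq_zero.1 h4 with h | h
        · exact absurd h hα2
        · exact h
      have h6 : pc x = 0 := hφ0 _ h5
      have h7 : x = pn x := by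
        calc x = pc x + pn x := (hpcpn x).symm
        _ = 0 + pn x := by rw [h6]
        _ = pn x := zero_add _
      rw [h7]
      exact hpn_mem x
  · -- isometry / anti-isometry on the centers
    intro z hz w hw
    have e1 : ψ z = (α ^ 2) • φ z := by
      rw [hψapp, hpc_left z hz, hpn_right z hz, hφz, smul_zero, add_zero]
    have e2 : ψ w = (α ^ 2) • φ w := by
      rw [hψapp, hpc_left w hw, hpn_right w hw, hφz, smul_zero, add_zero]
    rw [e1, e2, hB2m, map_smul, smul_eq_mul]
    have e3 : B₂ (φ z) (φ w) = c * B₁ z w := by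
      rw [← hDa, hDc z hz w hw, hcdef]
    rw [e3]
    have : α ^ 2 * (α ^ 2 * (c * B₁ z w)) = (α ^ (4:ℕ) * c) * B₁ z w := by ring
    rw [this, hαc]
  · -- rescaling on n₁
    intro x hx
    rw [hψapp, hpc_right x hx, hpn_left x hx, hφz, smul_zero, zero_add]
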